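/- Let (V,M) have the density f(v,m) = 1_{[7/8,1]}(v)·( (1/(v−m)²)·1_{[1/4, v−1/8]}(m) + (4/(v−1/4))·1_{[0,1/4)}(m) ) on [0,1]². Then for every b ∈ [0,1], E[(V−b)·1{M ≤ b}] equals: b·(1/2 + (1−4b)ln(6/5)) if b ∈ [0,1/4); 1/8 if b ∈ [1/4,3/4); −(4b² − 6b + 17/8) if b ∈ [3/4,7/8); and 15/16 − b if b ∈ [7/8,1]. -/

import Mathlib

open MeasureTheory

noncomputable def f0 : ℝ × ℝ → ℝ := fun p =>
  if p.1 ∈ Set.Icc (7/8:ℝ) 1 then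
    (if p.2 ∈ Set.Icc (1/4:ℝ) (p.1 - 1/8) then 1/(p.1 - p.2)^2 else 0)
      + (if p.2 ∈ Set.Ico (0:ℝ) (1/4) then 4/(p.1 - 1/4) else 0)
  else 0

lemma f0_meas : Measurable f0 := by
  unfold f0
  apply Measurable.ite (measurableSet_Icc.preimage measurable_fst)
  · apply Measurable.add
    · apply Measurable.ite
      · exact measurableSet_le measurable_const measurable_snd |>.inter
          (measurableSet_le measurable_snd (measurable_fst.sub measurable_const))
      · exact (measurable_const.div ((measurable_fst.sub measurable_snd).pow measurable_const))
      · exact measurable_const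
    · apply Measurable.ite
      · exact (measurableSet_le measurable_const measurable_snd).inter
          (measurableSet_lt measurable_snd measurable_const)
      · exact measurable_const.div (measurable_fst.sub measurable_const)
      · exact measurable_const
  · exact measurable_const


lemma f0_nonneg (p : ℝ × ℝ) : 0 ≤ f0 p := by
  unfold f0
  split_ifs with h1 h2 h3 h4 h5 <;>
      simp only [Set.mem_Icc, Set.mem_Ico] at *
  all_goals try norm_num
  all_goals
    have h14 : (0:ℝ) < p.1 - 1/4 := by linarith [h1.1]
  all_goals positivity

lemma f0_bound (p : ℝ × ℝ) : f0 p ≤ 71 := by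
  have key : ∀ x y : ℝ, 7/8 ≤ x → x ≤ 1 → y ≤ x - 1/8 →
      1/(x - y)^2 ≤ 64 := by
    intro x y hx1 hx2 hy
    have h8 : (1:ℝ)/8 ≤ x - y := by linarith
    rw [div_le_iff₀ (by nlinarith)]; nlinarith
  have key2 : ∀ x : ℝ, 7/8 ≤ x → 4/(x - 1/4) ≤ 32/5 := by
    intro x hx
    rw [div_le_iff₀ (by linarith)]; nlinarith
  unfold f0
  split_ifs with h1 h2 h3 h4 h5 <;>
      simp only [Set.mem_Icc, Set.mem_Ico] at *
  · linarith [key p.1 p.2 h1.1 h1.2 h2.2, key2 p.1 h1.1]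
  · linarith [key p.1 p.2 h1.1 h1.2 h2.2]
  · linarith [key2 p.1 h1.1]
  all_goals norm_num

noncomputable def innerVal (b v : ℝ) : ℝ :=
  if b < 1/4 then b * ((v - b) * (4/(v - 1/4)))
  else if b ≤ v - 1/8 then 1 else 8*(v - b)

lemma inner_zero (b v : ℝ) (hv : v ∉ Set.Icc (7/8:ℝ) 1) :
    ∫ m : ℝ, f0 (v, m) * ((v - b) * (if m ≤ b then 1 else 0)) = 0 := by
  have h : ∀ m : ℝ, f0 (v, m) = 0 := fun m => by unfold f0; rw [if_neg hv]
  simp [h]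

lemma inner_eq (b v : ℝ) (hb0 : 0 ≤ b) (hb1 : b ≤ 1) (hv : v ∈ Set.Icc (7/8:ℝ) 1) :
    ∫ m : ℝ, f0 (v, m) * ((v - b) * (if m ≤ b then 1 else 0)) = innerVal b v := by
  obtain ⟨hv1, hv2⟩ := hv
  have hf0 : ∀ m : ℝ, f0 (v, m) =
      (if m ∈ Set.Icc (1/4:ℝ) (v - 1/8) then 1/(v - m)^2 else 0)
        + (if m ∈ Set.Ico (0:ℝ) (1/4) then 4/(v - 1/4) else 0) := by
    intro m; unfold f0
    rw [if_pos (Set.mem_Icc.mpr ⟨hv1, hv2⟩)]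
  by_cases hblt : b < 1/4
  · -- small bid case
    have key : (fun m : ℝ => f0 (v, m) * ((v - b) * (if m ≤ b then 1 else 0)))
        = Set.indicator (Set.Icc (0:ℝ) b) (fun _ => (v-b) * (4/(v-1/4))) := by
      funext m
      rw [hf0]
      by_cases h3 : m ≤ b
      · have h1 : m ∉ Set.Icc (1/4:ℝ) (v - 1/8) := by
          intro hc; exact absurd hc.1 (by linarith)
        by_cases h2 : m ∈ Set.Ico (0:ℝ) (1/4)
        · have hm : m ∈ Set.Icc (0:ℝ) b := ⟨h2.1, h3⟩
          rw [if_neg h1, if_pos h2, if_pos h3, Set.indicator_of_mem hm]; ring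
        · have hm0 : m < 0 := by
            by_contra hc; push_neg at hc; exact h2 ⟨hc, by linarith⟩
          have hm : m ∉ Set.Icc (0:ℝ) b := fun hc => absurd hc.1 (not_le.mpr hm0)
          rw [if_neg h1, if_neg h2, if_pos h3, Set.indicator_of_notMem hm]; ring
      · have hm : m ∉ Set.Icc (0:ℝ) b := fun hc => h3 hc.2
        rw [if_neg h3, Set.indicator_of_notMem hm]; ring
    rw [key, integral_indicator_const _ measurableSet_Icc, measureReal_def, Real.volume_Icc,
      ENNReal.toReal_ofReal (by linarith), smul_eq_mul]
    unfold innerVal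
    rw [if_pos hblt]; ring
  · -- b ≥ 1/4
    push_neg at hblt
    set t := min b (v - 1/8) with ht
    have ht4 : (1:ℝ)/4 ≤ t := le_min hblt (by linarith)
    have htv : t ≤ v - 1/8 := min_le_right _ _
    have htb : t ≤ b := min_le_left _ _
    have key : (fun m : ℝ => f0 (v, m) * ((v - b) * (if m ≤ b then 1 else 0)))
        = fun m => Set.indicator (Set.Icc (1/4:ℝ) t) (fun m => (v-b) * (1/(v-m)^2)) m
            + Set.indicator (Set.Ico (0:ℝ) (1/4)) (fun _ => (v-b) * (4/(v-1/4))) m := by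
      funext m
      rw [hf0]
      by_cases h2 : m ∈ Set.Ico (0:ℝ) (1/4)
      · have h1 : m ∉ Set.Icc (1/4:ℝ) (v - 1/8) := fun hc => absurd hc.1 (not_le.mpr h2.2)
        have h3 : m ≤ b := le_of_lt (lt_of_lt_of_le h2.2 hblt)
        have hm1 : m ∉ Set.Icc (1/4:ℝ) t := fun hc => (not_le.mpr h2.2) hc.1
        rw [if_neg h1, if_pos h2, if_pos h3, Set.indicator_of_notMem hm1,
          Set.indicator_of_mem h2]; ring
      · by_cases h1 : m ∈ Set.Icc (1/4:ℝ) (v - 1/8)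
        · by_cases h3 : m ≤ b
          · have hm1 : m ∈ Set.Icc (1/4:ℝ) t := ⟨h1.1, le_min h3 h1.2⟩
            rw [if_pos h1, if_neg h2, if_pos h3, Set.indicator_of_mem hm1,
              Set.indicator_of_notMem h2]; ring
          · have hm1 : m ∉ Set.Icc (1/4:ℝ) t := fun hc => h3 (le_trans hc.2 htb)
            rw [if_pos h1, if_neg h2, if_neg h3, Set.indicator_of_notMem hm1,
              Set.indicator_of_notMem h2]; ring
        · have hm1 : m ∉ Set.Icc (1/4:ℝ) t := fun hc => h1 ⟨hc.1, le_trans hc.2 htv⟩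
          rw [if_neg h1, if_neg h2, Set.indicator_of_notMem hm1,
            Set.indicator_of_notMem h2]; ring
    have hcont : ContinuousOn (fun m => (v-b) * (1/(v-m)^2)) (Set.Icc (1/4:ℝ) t) := by
      apply ContinuousOn.mul continuousOn_const
      apply ContinuousOn.div continuousOn_const (by fun_prop)
      intro x hx
      have hx2 : x ≤ v - 1/8 := le_trans hx.2 htv
      have : v - x ≠ 0 := ne_of_gt (by linarith)
      exact pow_ne_zero 2 this
    have hi1 : Integrable (Set.indicator (Set.Icc (1/4:ℝ) t)
        (fun m => (v-b) * (1/(v-m)^2))) := by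
      rw [integrable_indicator_iff measurableSet_Icc]
      exact hcont.integrableOn_Icc
    have hi2 : Integrable (Set.indicator (Set.Ico (0:ℝ) (1/4))
        (fun _ : ℝ => (v-b) * (4/(v-1/4)))) := by
      rw [integrable_indicator_iff measurableSet_Ico]
      exact (integrableOn_const_iff).mpr (Or.inr (by rw [Real.volume_Ico]; exact ENNReal.ofReal_lt_top))
    rw [key, integral_add hi1 hi2, integral_indicator measurableSet_Icc,
      integral_indicator_const _ measurableSet_Ico, measureReal_def, Real.volume_Ico,
      ENNReal.toReal_ofReal (by norm_num), smul_eq_mul]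
    have hIv : ∫ m in Set.Icc (1/4:ℝ) t, (v-b) * (1/(v-m)^2)
        = (v-b)*(v-t)⁻¹ - (v-b)*(v-1/4)⁻¹ := by
      rw [MeasureTheory.integral_Icc_eq_integral_Ioc, ← intervalIntegral.integral_of_le ht4]
      apply intervalIntegral.integral_eq_sub_of_hasDerivAt (f := fun m => (v-b)*(v-m)⁻¹)
      · intro x hx
        rw [Set.uIcc_of_le ht4] at hx
        have hne : v - x ≠ 0 := ne_of_gt (by linarith [hx.2, htv])
        have h1 : HasDerivAt (fun m : ℝ => v - m) (-1) x := by
          simpa using (hasDerivAt_id x).const_sub v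
        have H : HasDerivAt (fun m : ℝ => (v - m)⁻¹) (1/(v-x)^2) x := by
          have := h1.inv hne
          refine this.congr_deriv ?_
          field_simp
        exact H.const_mul (v-b)
      · apply ContinuousOn.intervalIntegrable
        rw [Set.uIcc_of_le ht4]
        exact hcont
    rw [hIv]
    unfold innerVal
    rw [if_neg (not_lt.mpr hblt)]
    have h14 : v - (1/4:ℝ) ≠ 0 := ne_of_gt (by linarith)
    rcases le_or_gt b (v - 1/8) with hbv | hbv
    · rw [if_pos hbv]
      have htb' : t = b := min_eq_left hbv
      have hvb : v - b ≠ 0 := ne_of_gt (by linarith)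
      rw [htb', mul_inv_cancel₀ hvb, div_eq_mul_inv]
      ring
    · rw [if_neg (not_le.mpr hbv)]
      have htb' : t = v - 1/8 := min_eq_right (le_of_lt hbv)
      rw [htb']
      have : v - (v - 1/8) = (1/8:ℝ) := by ring
      rw [this, div_eq_mul_inv]
      ring

lemma deriv_8vb (b v : ℝ) : HasDerivAt (fun v => 4*(v - b)^2) (8*(v - b)) v := by
  have h := (((hasDerivAt_id v).sub_const b).pow 2).const_mul (4:ℝ)
  refine h.congr_deriv (Eq.symm ?_)
  simp only [id_eq]
  ring

lemma outer_eq (b : ℝ) (hb0 : 0 ≤ b) (hb1 : b ≤ 1) :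
    ∫ v in (7/8:ℝ)..1, innerVal b v
      = if b < 1/4 then b * (1/2 + (1 - 4*b) * Real.log (6/5))
        else if b < 3/4 then 1/8
        else if b < 7/8 then -(4*b^2 - 6*b + 17/8)
        else 15/16 - b := by
  by_cases hb14 : b < 1/4
  · rw [if_pos hb14]
    have hpt : ∀ v : ℝ, innerVal b v = b*((v-b)*(4/(v-1/4))) := by
      intro v; unfold innerVal; rw [if_pos hb14]
    simp only [hpt]
    have hcont : ContinuousOn (fun v => b*((v-b)*(4/(v-1/4)))) (Set.uIcc (7/8:ℝ) 1) := by
      rw [Set.uIcc_of_le (by norm_num)]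
      apply ContinuousOn.mul continuousOn_const
      apply ContinuousOn.mul (by fun_prop)
      apply ContinuousOn.div continuousOn_const (by fun_prop)
      intro x hx
      exact ne_of_gt (by linarith [hx.1] : (0:ℝ) < x - 1/4)
    have hval : ∫ v in (7/8:ℝ)..1, b*((v-b)*(4/(v-1/4)))
        = (4*b*(1 + (1/4-b)*Real.log (1-1/4))) - (4*b*(7/8 + (1/4-b)*Real.log (7/8-1/4))) := by
      apply intervalIntegral.integral_eq_sub_of_hasDerivAt
        (f := fun v => 4*b*(v + (1/4-b)*Real.log (v-1/4)))
      · intro x hx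
        rw [Set.uIcc_of_le (by norm_num)] at hx
        have hne : x - (1/4:ℝ) ≠ 0 := ne_of_gt (by linarith [hx.1])
        have h1 : HasDerivAt (fun v : ℝ => v - 1/4) 1 x := (hasDerivAt_id x).sub_const _
        have hlog : HasDerivAt (fun v : ℝ => Real.log (v - 1/4)) (1/(x - 1/4)) x := h1.log hne
        have H := ((hasDerivAt_id x).add (hlog.const_mul (1/4-b))).const_mul (4*b)
        refine H.congr_deriv (Eq.symm ?_)
        have h' := mul_inv_cancel₀ hne
        linear_combination (4*b) * h'
      · exact hcont.intervalIntegrable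
    rw [hval]
    have hlog65 : Real.log ((3:ℝ)/4) - Real.log ((5:ℝ)/8) = Real.log (6/5) := by
      rw [← Real.log_div (by norm_num) (by norm_num)]
      norm_num
    have e1 : (1:ℝ) - 1/4 = 3/4 := by norm_num
    have e2 : (7:ℝ)/8 - 1/4 = 5/8 := by norm_num
    rw [e1, e2]
    linear_combination (b - 4*b^2) * hlog65
  · push_neg at hb14
    by_cases hb34 : b < 3/4
    · rw [if_neg (not_lt.mpr hb14), if_pos hb34]
      rw [intervalIntegral.integral_congr (g := fun _ => (1:ℝ))
        (by
          intro v hv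
          rw [Set.uIcc_of_le (by norm_num)] at hv
          unfold innerVal
          rw [if_neg (not_lt.mpr hb14), if_pos (by linarith [hv.1])])]
      simp
      norm_num
    · push_neg at hb34
      by_cases hb78 : b < 7/8
      · rw [if_neg (not_lt.mpr hb14), if_neg (not_lt.mpr hb34), if_pos hb78]
        have hc1 : (7:ℝ)/8 ≤ b + 1/8 := by linarith
        have hc2 : b + 1/8 ≤ 1 := by linarith
        have eqA : Set.EqOn (innerVal b) (fun v => 8*(v-b)) (Set.uIcc (7/8:ℝ) (b+1/8)) := by
          intro v hv
          rw [Set.uIcc_of_le hc1] at hv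
          simp only [innerVal, if_neg (not_lt.mpr hb14)]
          by_cases h : b ≤ v - 1/8
          · have hvc : v = b + 1/8 := le_antisymm (by linarith [hv.2]) (by linarith)
            rw [if_pos h, hvc]; norm_num
          · rw [if_neg h]
        have eqB : Set.EqOn (innerVal b) (fun _ => (1:ℝ)) (Set.uIcc (b+1/8) 1) := by
          intro v hv
          rw [Set.uIcc_of_le hc2] at hv
          simp only [innerVal, if_neg (not_lt.mpr hb14)]
          rw [if_pos (by linarith [hv.1])]
        have hintA : IntervalIntegrable (innerVal b) volume (7/8) (b+1/8) := by
          rw [intervalIntegrable_iff_integrableOn_Ioc_of_le hc1]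
          have hcA : IntegrableOn (fun v : ℝ => 8*(v-b)) (Set.Ioc (7/8:ℝ) (b+1/8)) volume :=
            Continuous.integrableOn_Ioc (by fun_prop)
          exact MeasureTheory.IntegrableOn.congr_fun hcA
            (fun v hv => (eqA (by rw [Set.uIcc_of_le hc1]; exact Set.Ioc_subset_Icc_self hv)).symm)
            measurableSet_Ioc
        have hintB : IntervalIntegrable (innerVal b) volume (b+1/8) 1 := by
          rw [intervalIntegrable_iff_integrableOn_Ioc_of_le hc2]
          have hcB : IntegrableOn (fun _ : ℝ => (1:ℝ)) (Set.Ioc (b+1/8) (1:ℝ)) volume :=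
            Continuous.integrableOn_Ioc continuous_const
          exact MeasureTheory.IntegrableOn.congr_fun hcB
            (fun v hv => (eqB (by rw [Set.uIcc_of_le hc2]; exact Set.Ioc_subset_Icc_self hv)).symm)
            measurableSet_Ioc
        rw [← intervalIntegral.integral_add_adjacent_intervals hintA hintB]
        rw [intervalIntegral.integral_congr eqA, intervalIntegral.integral_congr eqB]
        have hA : ∫ v in (7/8:ℝ)..(b+1/8), 8*(v-b) = 4*((b+1/8)-b)^2 - 4*(7/8-b)^2 := by
          apply intervalIntegral.integral_eq_sub_of_hasDerivAt (f := fun v => 4*(v-b)^2)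
          · intro x _; exact deriv_8vb b x
          · apply Continuous.intervalIntegrable
            fun_prop
        rw [hA]
        simp only [intervalIntegral.integral_const, smul_eq_mul, mul_one]
        ring
      · push_neg at hb78
        rw [if_neg (not_lt.mpr hb14), if_neg (not_lt.mpr hb34), if_neg (not_lt.mpr hb78)]
        have eqA : Set.EqOn (innerVal b) (fun v => 8*(v-b)) (Set.uIcc (7/8:ℝ) 1) := by
          intro v hv
          rw [Set.uIcc_of_le (by norm_num)] at hv
          simp only [innerVal, if_neg (not_lt.mpr hb14)]
          by_cases h : b ≤ v - 1/8
          · have hvb : b = v - 1/8 := le_antisymm h (by linarith [hv.2])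
            rw [if_pos h, hvb]; norm_num
          · rw [if_neg h]
        rw [intervalIntegral.integral_congr eqA]
        have hA : ∫ v in (7/8:ℝ)..1, 8*(v-b) = 4*(1-b)^2 - 4*(7/8-b)^2 := by
          apply intervalIntegral.integral_eq_sub_of_hasDerivAt (f := fun v => 4*(v-b)^2)
          · intro x _; exact deriv_8vb b x
          · apply Continuous.intervalIntegrable
            fun_prop
        rw [hA]; ring

lemma f0_supp {p : ℝ × ℝ} (h : f0 p ≠ 0) : p.1 ∈ Set.Icc (7/8:ℝ) 1 ∧ 0 ≤ p.2 := by
  constructor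
  · by_contra hc
    exact h (by unfold f0; rw [if_neg hc])
  · by_contra hc
    push_neg at hc
    apply h
    unfold f0
    split_ifs with h1 h2 h3 h4
    · exact absurd h2.1 (by linarith)
    · exact absurd h2.1 (by linarith)
    · exact absurd h4.1 (by linarith)
    · norm_num
    · rfl

lemma G_meas (b : ℝ) :
    Measurable (fun p : ℝ × ℝ => f0 p * ((p.1 - b) * (if p.2 ≤ b then 1 else 0))) := by
  apply f0_meas.mul
  apply (measurable_fst.sub measurable_const).mul
  exact Measurable.ite (measurableSet_le measurable_snd measurable_const)
    measurable_const measurable_const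

lemma G_integrable (b : ℝ) (hb0 : 0 ≤ b) (hb1 : b ≤ 1) :
    Integrable (fun p : ℝ × ℝ => f0 p * ((p.1 - b) * (if p.2 ≤ b then 1 else 0))) := by
  set G := fun p : ℝ × ℝ => f0 p * ((p.1 - b) * (if p.2 ≤ b then 1 else 0)) with hG
  have hsupp : Function.support G ⊆ (Set.Icc (7/8:ℝ) 1) ×ˢ (Set.Icc (0:ℝ) 1) := by
    intro p hp
    have h1 : f0 p ≠ 0 := by
      intro h; apply hp; rw [hG]; simp only [h, zero_mul]
    obtain ⟨hv, hm0⟩ := f0_supp h1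
    have hmb : p.2 ≤ b := by
      by_contra hc
      apply hp
      rw [hG]; simp only [if_neg hc, mul_zero]
    exact ⟨hv, hm0, le_trans hmb hb1⟩
  rw [← integrableOn_iff_integrable_of_support_subset hsupp]
  apply Measure.integrableOn_of_bounded (M := 71)
  · exact ((isCompact_Icc.prod isCompact_Icc).measure_lt_top).ne
  · exact (G_meas b).aestronglyMeasurable
  · apply ae_of_all
    intro p
    rw [hG]
    simp only [Real.norm_eq_abs, abs_mul]
    have h0 : |f0 p| = f0 p := abs_of_nonneg (f0_nonneg p)
    by_cases h : f0 p = 0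
    · simp [h]
    · obtain ⟨hv, _⟩ := f0_supp h
      have h1 : |p.1 - b| ≤ 1 := abs_le.mpr ⟨by linarith [hv.1, hb1], by linarith [hv.2, hb0]⟩
      have h2 : |if p.2 ≤ b then (1:ℝ) else 0| ≤ 1 := by split_ifs <;> norm_num
      have h3 : |p.1 - b| * |if p.2 ≤ b then (1:ℝ) else 0| ≤ 1 :=
        le_trans (mul_le_mul h1 h2 (abs_nonneg _) (by norm_num)) (by norm_num)
      calc |f0 p| * (|p.1 - b| * |if p.2 ≤ b then (1:ℝ) else 0|)
          ≤ 71 * 1 :=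
            mul_le_mul (le_trans (le_of_eq h0) (f0_bound p)) h3 (by positivity) (by norm_num)
        _ = 71 := by norm_num

lemma G_integral (b : ℝ) (hb0 : 0 ≤ b) (hb1 : b ≤ 1) :
    ∫ p : ℝ × ℝ, f0 p * ((p.1 - b) * (if p.2 ≤ b then 1 else 0))
      = if b < 1/4 then b * (1/2 + (1 - 4*b) * Real.log (6/5))
        else if b < 3/4 then 1/8
        else if b < 7/8 then -(4*b^2 - 6*b + 17/8)
        else 15/16 - b := by
  rw [MeasureTheory.Measure.volume_eq_prod]
  rw [MeasureTheory.integral_prod _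
    (by rw [← MeasureTheory.Measure.volume_eq_prod]; exact G_integrable b hb0 hb1)]
  have heq : (fun v : ℝ => ∫ m : ℝ, f0 (v, m) * ((v - b) * (if m ≤ b then 1 else 0)))
      = Set.indicator (Set.Icc (7/8:ℝ) 1) (innerVal b) := by
    funext v
    by_cases hv : v ∈ Set.Icc (7/8:ℝ) 1
    · rw [Set.indicator_of_mem hv]; exact inner_eq b v hb0 hb1 hv
    · rw [Set.indicator_of_notMem hv]; exact inner_zero b v hv
  show (∫ v : ℝ, ∫ m : ℝ, f0 (v, m) * ((v - b) * (if m ≤ b then 1 else 0))) = _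
  rw [heq, integral_indicator measurableSet_Icc, integral_Icc_eq_integral_Ioc,
    ← intervalIntegral.integral_of_le (by norm_num : (7/8:ℝ) ≤ 1)]
  exact outer_eq b hb0 hb1

/-- Expected utility under the base density f in the semi-transparent lower bound. -/
theorem stmt_10 {Ω : Type*} [MeasurableSpace Ω] {P : MeasureTheory.Measure Ω}
    [IsProbabilityMeasure P]
    (V M : Ω → ℝ) (hVM : Measurable (fun ω => (V ω, M ω)))
    (f : ℝ × ℝ → ℝ)
    (hf : ∀ p : ℝ × ℝ, f p =
      if p.1 ∈ Set.Icc (7/8:ℝ) 1 then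
        (if p.2 ∈ Set.Icc (1/4:ℝ) (p.1 - 1/8) then 1/(p.1 - p.2)^2 else 0)
          + (if p.2 ∈ Set.Ico (0:ℝ) (1/4) then 4/(p.1 - 1/4) else 0)
      else 0)
    (hdens : Measure.map (fun ω => (V ω, M ω)) P
      = volume.withDensity (fun p => ENNReal.ofReal (f p))) :
    ∀ b ∈ Set.Icc (0:ℝ) 1,
      (∫ ω, (V ω - b) * (if M ω ≤ b then 1 else 0) ∂P)
        = if b < 1/4 then b * (1/2 + (1 - 4*b) * Real.log (6/5))
          else if b < 3/4 then 1/8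
          else if b < 7/8 then -(4*b^2 - 6*b + 17/8)
          else 15/16 - b := by
  have hfe : f = f0 := funext hf
  subst hfe
  intro b hb
  obtain ⟨hb0, hb1⟩ := hb
  have hg : Measurable (fun p : ℝ × ℝ => (p.1 - b) * (if p.2 ≤ b then 1 else 0)) := by
    apply (measurable_fst.sub measurable_const).mul
    exact Measurable.ite (measurableSet_le measurable_snd measurable_const)
      measurable_const measurable_const
  have h1 : (∫ ω, (V ω - b) * (if M ω ≤ b then 1 else 0) ∂P)
      = ∫ p : ℝ × ℝ, (p.1 - b) * (if p.2 ≤ b then 1 else 0)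
          ∂(Measure.map (fun ω => (V ω, M ω)) P) := by
    rw [integral_map hVM.aemeasurable hg.aestronglyMeasurable]
  rw [h1, hdens]
  have h2 : (fun p : ℝ × ℝ => ENNReal.ofReal (f0 p))
      = fun p : ℝ × ℝ => ((f0 p).toNNReal : ENNReal) := rfl
  rw [h2, integral_withDensity_eq_integral_smul f0_meas.real_toNNReal]
  have h3 : (fun p : ℝ × ℝ => Real.toNNReal (f0 p) • ((p.1 - b) * (if p.2 ≤ b then 1 else 0)))
      = fun p : ℝ × ℝ => f0 p * ((p.1 - b) * (if p.2 ≤ b then 1 else 0)) := by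
    funext p
    rw [NNReal.smul_def, smul_eq_mul, Real.coe_toNNReal _ (f0_nonneg p)]
  rw [h3]
  exact G_integral b hb0 hb1
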